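/- Privacy from conjugate predictability: Let ρ^{ABSE} be a density operator with dim A = d, and suppose there exist a conjugate basis {|x̃⟩}_{x=0}^{d−1} of ℂ^d and a POVM {Λ̃_y}_{y=0}^{d−1} on B⊗S such that ∑_{x≠y} Tr[(P̃_x^A ⊗ Λ̃_y^{BS} ⊗ 1^E) ρ] = 0. Then for every POVM {Γ_g} on E, the joint distribution p(k,g) := Tr[(P_k^A ⊗ 1^{BS} ⊗ Γ_g) ρ] satisfies H(Z^A|Γ^E) = log₂ d; equivalently, the standard-basis outcome on A is uniformly distributed and statistically independent of the outcome of Γ^E. -/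

import Mathlib

open Matrix Complex BigOperators Finset
open Kronecker
open scoped ComplexOrder

noncomputable section

/-- ρ is a density operator: positive semidefinite with unit trace. -/
def IsDensity {ι : Type*} [Fintype ι] (ρ : Matrix ι ι ℂ) : Prop :=
  ρ.PosSemidef ∧ ρ.trace = 1

/-- A POVM indexed by `μ` on a system with index set `ι`. -/
def IsPOVM {μ ι : Type*} [Fintype μ] [Fintype ι] [DecidableEq ι]
    (Λ : μ → Matrix ι ι ℂ) : Prop :=
  (∀ m, (Λ m).PosSemidef) ∧ ∑ m, Λ m = 1

/-- Projector |k⟩⟨k| onto a standard basis element. -/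
def stdProj {ι : Type*} [DecidableEq ι] (k : ι) : Matrix ι ι ℂ :=
  Matrix.single k k 1

/-- The standard basis vector |k⟩. -/
def stdVec {ι : Type*} [DecidableEq ι] (k : ι) : ι → ℂ :=
  fun i => if i = k then 1 else 0

/-- The old `Matrix.PosSemidef.sqrt` (removed from Mathlib), with its old definition. -/
def posSemidefSqrt {ι : Type*} [Fintype ι] [DecidableEq ι] {M : Matrix ι ι ℂ}
    (hM : M.PosSemidef) : Matrix ι ι ℂ :=
  (hM.1.eigenvectorUnitary : Matrix ι ι ℂ) *
    Matrix.diagonal ((↑) ∘ (Real.sqrt ·) ∘ hM.1.eigenvalues) *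
    (star hM.1.eigenvectorUnitary : Matrix ι ι ℂ)

/-- Trace norm Tr √(MᴴM). -/
def traceNorm {ι : Type*} [Fintype ι] [DecidableEq ι] (M : Matrix ι ι ℂ) : ℝ :=
  (posSemidefSqrt (Matrix.posSemidef_conjTranspose_mul_self M)).trace.re

def negMulLog2 (x : ℝ) : ℝ := -(x * Real.logb 2 x)

/-- Shannon entropy in bits. -/
def shannon {α : Type*} [Fintype α] (p : α → ℝ) : ℝ := ∑ a, negMulLog2 (p a)

/-- Conditional Shannon entropy (in bits) of the first component given the second. -/
def condEnt {α β : Type*} [Fintype α] [Fintype β] (p : α × β → ℝ) : ℝ :=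
  shannon p - shannon (fun b => ∑ a, p (a, b))

/-- Element |x̃⟩ = (1/√d) ∑ₖ e^{iθₓₖ}|k⟩ of a candidate conjugate basis. -/
def conjVec (d : ℕ) (θ : Fin d → Fin d → ℝ) (x : Fin d) : Fin d → ℂ :=
  fun k => (Real.sqrt d : ℂ)⁻¹ * Complex.exp (Complex.I * (θ x k : ℂ))

/-- The family of phases θ defines a conjugate (orthonormal) basis. -/
def IsConjBasis (d : ℕ) (θ : Fin d → Fin d → ℝ) : Prop :=
  ∀ x y : Fin d, (∑ k, star (conjVec d θ x k) * conjVec d θ y k) = if x = y then 1 else 0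

/-- Projector P̃ₓ = |x̃⟩⟨x̃|. -/
def conjProj (d : ℕ) (θ : Fin d → Fin d → ℝ) (x : Fin d) : Matrix (Fin d) (Fin d) ℂ :=
  Matrix.vecMulVec (conjVec d θ x) (star (conjVec d θ x))

/-- The canonical maximally entangled vector |Φ_d⟩. -/
def maxEntVec (d : ℕ) : Fin d × Fin d → ℂ :=
  fun P => if P.1 = P.2 then (Real.sqrt d : ℂ)⁻¹ else 0

/-- Density operator of the canonical maximally entangled state Φ_d. -/
def maxEnt (d : ℕ) : Matrix (Fin d × Fin d) (Fin d × Fin d) ℂ :=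
  Matrix.vecMulVec (maxEntVec d) (star (maxEntVec d))

/-- Twisting operator U = ∑ⱼₖ Pⱼ ⊗ Pₖ ⊗ Vⱼₖ. -/
def IsTwisting {d : ℕ} {σ : Type*} [Fintype σ] [DecidableEq σ]
    (U : Matrix (Fin d × (Fin d × σ)) (Fin d × (Fin d × σ)) ℂ) : Prop :=
  ∃ V : Fin d → Fin d → Matrix σ σ ℂ,
    (∀ j k, V j k ∈ Matrix.unitaryGroup σ ℂ) ∧
    U = ∑ j, ∑ k, stdProj j ⊗ₖ (stdProj k ⊗ₖ V j k)

/-- Exact private state γ = U(Φ_d ⊗ ξ)U†. -/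
def IsExactPrivate {d : ℕ} {σ : Type*} [Fintype σ] [DecidableEq σ]
    (γ : Matrix (Fin d × (Fin d × σ)) (Fin d × (Fin d × σ)) ℂ) : Prop :=
  ∃ (U : Matrix (Fin d × (Fin d × σ)) (Fin d × (Fin d × σ)) ℂ) (ξ : Matrix σ σ ℂ),
    IsTwisting U ∧ IsDensity ξ ∧
    γ = U * (Matrix.reindex (Equiv.prodAssoc (Fin d) (Fin d) σ)
      (Equiv.prodAssoc (Fin d) (Fin d) σ) (maxEnt d ⊗ₖ ξ)) * Uᴴ

/-- ε-secret key: within trace distance 2ε of a perfect secret key state. -/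
def IsSecretKey (ε : ℝ) {ι ηE : Type*} [Fintype ι] [DecidableEq ι] [Fintype ηE] [DecidableEq ηE]
    (ρ : Matrix (ι × (ι × ηE)) (ι × (ι × ηE)) ℂ) : Prop :=
  ∃ ρE : Matrix ηE ηE ℂ, IsDensity ρE ∧
    traceNorm (ρ - (Fintype.card ι : ℂ)⁻¹ • ∑ k, stdProj k ⊗ₖ (stdProj k ⊗ₖ ρE)) ≤ 2 * ε

/-- Standard-basis key measurement on systems A and B. -/
def keyMeasured {ι ηE : Type*} [Fintype ι] [DecidableEq ι] [Fintype ηE] [DecidableEq ηE]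
    (ρ : Matrix (ι × (ι × ηE)) (ι × (ι × ηE)) ℂ) : Matrix (ι × (ι × ηE)) (ι × (ι × ηE)) ℂ :=
  ∑ j, ∑ k, (stdProj j ⊗ₖ (stdProj k ⊗ₖ (1 : Matrix ηE ηE ℂ))) * ρ *
    (stdProj j ⊗ₖ (stdProj k ⊗ₖ (1 : Matrix ηE ηE ℂ)))

/-- ε-private state: some (equivalently, every) purification yields an ε-secret key
upon standard-basis key measurement. -/
def IsEpsPrivate (ε : ℝ) {ι σ : Type*} [Fintype ι] [DecidableEq ι] [Fintype σ] [DecidableEq σ]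
    (ψ : Matrix (ι × (ι × σ)) (ι × (ι × σ)) ℂ) : Prop :=
  ∃ (dE : ℕ) (v : ι × (ι × (σ × Fin dE)) → ℂ),
    (∀ P Q : ι × (ι × σ),
      (∑ e, v (P.1, (P.2.1, (P.2.2, e))) * star (v (Q.1, (Q.2.1, (Q.2.2, e))))) = ψ P Q) ∧
    IsSecretKey ε (keyMeasured (Matrix.of fun P Q : ι × (ι × Fin dE) =>
      ∑ s : σ, v (P.1, (P.2.1, (s, P.2.2))) * star (v (Q.1, (Q.2.1, (s, Q.2.2))))))

/-- ε-private state when the eavesdropper additionally holds a public classical register. -/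
def IsEpsPrivateGivenPublic (ε : ℝ) {ι σ μR : Type*}
    [Fintype ι] [DecidableEq ι] [Fintype σ] [DecidableEq σ] [Fintype μR] [DecidableEq μR]
    (ψ : Matrix ((ι × (ι × σ)) × μR) ((ι × (ι × σ)) × μR) ℂ) : Prop :=
  ∃ (dE : ℕ) (v : ((ι × (ι × σ)) × μR) × Fin dE → ℂ),
    (∀ P Q, (∑ e, v (P, e) * star (v (Q, e))) = ψ P Q) ∧
    IsSecretKey ε (keyMeasured (Matrix.of fun P Q : ι × (ι × (μR × Fin dE)) =>
      ∑ s : σ, v (((P.1, (P.2.1, s)), P.2.2.1), P.2.2.2) *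
        star (v (((Q.1, (Q.2.1, s)), Q.2.2.1), Q.2.2.2))))

open Classical in
/-- Von Neumann entropy in bits (via eigenvalues; zero on non-Hermitian input). -/
def vonNeumann {ι : Type*} [Fintype ι] [DecidableEq ι] (ρ : Matrix ι ι ℂ) : ℝ :=
  if h : ρ.IsHermitian then ∑ i, negMulLog2 (h.eigenvalues i) else 0

/-- Unnormalized conditional state on β given measurement of the vector u on ι. -/
def condStateVec {ι β : Type*} [Fintype ι] (u : ι → ℂ)
    (ρ : Matrix (ι × β) (ι × β) ℂ) : Matrix β β ℂ :=
  Matrix.of fun w w' => ∑ a, ∑ a', star (u a) * ρ (a, w) (a', w') * u a'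

/-- Outcome probability of the measurement vector u. -/
def measProb {ι β : Type*} [Fintype ι] [Fintype β] (u : ι → ℂ)
    (ρ : Matrix (ι × β) (ι × β) ℂ) : ℝ := (condStateVec u ρ).trace.re

/-- Holevo quantity of the ensemble induced on β by measuring the basis family W on ι. -/
def holevoB {ι β κm : Type*} [Fintype ι] [Fintype β] [DecidableEq β] [Fintype κm]
    (W : κm → ι → ℂ) (ρ : Matrix (ι × β) (ι × β) ℂ) : ℝ :=
  vonNeumann (∑ x, condStateVec (W x) ρ) -
    ∑ x, measProb (W x) ρ *
      vonNeumann ((((condStateVec (W x) ρ).trace)⁻¹) • condStateVec (W x) ρ)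

open Classical in
/-- Positive-semidefinite square root (zero on non-PSD input). -/
def psqrt {ι : Type*} [Fintype ι] [DecidableEq ι] (M : Matrix ι ι ℂ) : Matrix ι ι ℂ :=
  if h : M.PosSemidef then posSemidefSqrt h else 0

/-- n-fold tensor (Kronecker) product of a family of matrices. -/
def tensorPow {dB : ℕ} {n : ℕ} (φ : Fin n → Matrix (Fin dB) (Fin dB) ℂ) :
    Matrix (Fin n → Fin dB) (Fin n → Fin dB) ℂ :=
  Matrix.of fun w w' => ∏ i, φ i (w i) (w' i)

/-- n-fold tensor power of a bipartite state, grouped as (Aⁿ) × (Bⁿ). -/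
def tpow {α β : Type*} (ψ : Matrix (α × β) (α × β) ℂ) (n : ℕ) :
    Matrix ((Fin n → α) × (Fin n → β)) ((Fin n → α) × (Fin n → β)) ℂ :=
  Matrix.of fun P Q => ∏ i, ψ (P.1 i, P.2 i) (Q.1 i, Q.2 i)

/-- Output of a one-way protocol with Alice-instrument Kraus operators E and Bob isometries V;
the classical message is kept in a public register. -/
def protoOut {𝒜 ℬ 𝒜' ℬ' M κI : Type*} [Fintype 𝒜] [Fintype ℬ] [Fintype 𝒜'] [Fintype ℬ']
    [Fintype κI] [DecidableEq M]
    (E : M → κI → Matrix 𝒜' 𝒜 ℂ) (V : M → Matrix ℬ' ℬ ℂ)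
    (ρ : Matrix (𝒜 × ℬ) (𝒜 × ℬ) ℂ) : Matrix ((𝒜' × ℬ') × M) ((𝒜' × ℬ') × M) ℂ :=
  Matrix.of fun P Q =>
    if P.2 = Q.2 then
      (∑ i, ((E P.2 i ⊗ₖ V P.2) * ρ * (E P.2 i ⊗ₖ V P.2)ᴴ)) P.1 Q.1
    else 0

/-- Partial trace over the innermost factor. -/
def ptraceInner {α β γ : Type*} [Fintype γ] (M : Matrix (α × (β × γ)) (α × (β × γ)) ℂ) :
    Matrix (α × β) (α × β) ℂ :=
  Matrix.of fun P Q => ∑ c, M (P.1, (P.2, c)) (Q.1, (Q.2, c))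

/-- Partial trace over the first factor. -/
def ptraceL {α β : Type*} [Fintype α] (M : Matrix (α × β) (α × β) ℂ) : Matrix β β ℂ :=
  Matrix.of fun b b' => ∑ a, M (a, b) (a, b')
/-- Dot product of dit strings. -/
def zdot {d n : ℕ} (x y : Fin n → ZMod d) : ZMod d := ∑ a, x a * y a

/-- Syndrome map defined by a family of stabilizer strings. -/
def synMap {d n m : ℕ} (s : Fin m → (Fin n → ZMod d)) (k : Fin n → ZMod d) : Fin m → ZMod d :=
  fun i => zdot (s i) k

/-- Fourier (conjugate) basis vector |x̃⟩ on n qudits, with ω = e^{2πi/d}. -/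
def fourierVec (d n : ℕ) (x : Fin n → ZMod d) : (Fin n → ZMod d) → ℂ :=
  fun k => (Real.sqrt (d ^ n) : ℂ)⁻¹ *
    Complex.exp (2 * Real.pi * Complex.I / d) ^ (zdot x k).val

/-- Fourier basis projector P̃ₓ. -/
def fourierProj (d n : ℕ) (x : Fin n → ZMod d) :
    Matrix (Fin n → ZMod d) (Fin n → ZMod d) ℂ :=
  Matrix.vecMulVec (fourierVec d n x) (star (fourierVec d n x))

/-- Projector onto the span of standard basis vectors with a given classical label. -/
def classProj {K μ : Type*} [Fintype K] [DecidableEq K] [DecidableEq μ] (f : K → μ) (a : μ) :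
    Matrix K K ℂ := ∑ k, if f k = a then stdProj k else 0

/-- Projector Π̃_β onto the span of Fourier basis vectors with phase syndrome β. -/
def phaseProj (d n mx : ℕ) [NeZero d] (t : Fin mx → (Fin n → ZMod d)) (b : Fin mx → ZMod d) :
    Matrix (Fin n → ZMod d) (Fin n → ZMod d) ℂ :=
  ∑ x, if synMap t x = b then fourierProj d n x else 0

/-- The purification vector ∑ₖ √pₖ |k⟩|φₖ⟩. -/
def purVec {K W : Type*} (p : K → ℝ) (φ : K → W → ℂ) : K × W → ℂ :=
  fun P => (Real.sqrt (p P.1) : ℂ) * φ P.1 P.2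

/-- Reduced state on A ⊗ B of the pure state with amplitudes v on A ⊗ (B ⊗ (S ⊗ E)). -/
def redAB {K : Type*} {dB dS dE : ℕ} (v : K × (Fin dB × (Fin dS × Fin dE)) → ℂ) :
    Matrix (K × Fin dB) (K × Fin dB) ℂ :=
  Matrix.of fun P Q => ∑ sS : Fin dS, ∑ e : Fin dE,
    v (P.1, (P.2, (sS, e))) * star (v (Q.1, (Q.2, (sS, e))))

/-- Reduced state on A ⊗ B ⊗ S of the pure state with amplitudes v on A ⊗ (B ⊗ (S ⊗ E)). -/
def redABS {K : Type*} {dB dS dE : ℕ} (v : K × (Fin dB × (Fin dS × Fin dE)) → ℂ) :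
    Matrix (K × (Fin dB × Fin dS)) (K × (Fin dB × Fin dS)) ℂ :=
  Matrix.of fun P Q => ∑ e : Fin dE,
    v (P.1, (P.2.1, (P.2.2, e))) * star (v (Q.1, (Q.2.1, (Q.2.2, e))))

/-- The post-measurement vector |Ψ₂⟩ = ∑_{α,β,k} (Π_α Π̃_β ⊗ √Λ_{α,k} ⊗ 1)|Ψ⟩|k⟩^{B₂}|α⟩^R|β⟩^T,
with index grouping A × ((B × (S × E)) × (B₂ × (R × T))). -/
def oneShotVec {d n mz mx : ℕ} [NeZero d] {dB dS dE : ℕ}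
    (s : Fin mz → (Fin n → ZMod d)) (t : Fin mx → (Fin n → ZMod d))
    (Λ : (Fin mz → ZMod d) → (Fin n → ZMod d) → Matrix (Fin dB) (Fin dB) ℂ)
    (v : (Fin n → ZMod d) × (Fin dB × (Fin dS × Fin dE)) → ℂ) :
    (Fin n → ZMod d) × ((Fin dB × (Fin dS × Fin dE)) ×
      ((Fin n → ZMod d) × ((Fin mz → ZMod d) × (Fin mx → ZMod d)))) → ℂ :=
  fun P =>
    ∑ a' : Fin n → ZMod d, ∑ b' : Fin dB,
      ((classProj (synMap s) P.2.2.2.1 * phaseProj d n mx t P.2.2.2.2) P.1 a') *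
      (psqrt (Λ P.2.2.2.1 P.2.2.1) P.2.1.1 b') *
      v (a', (b', P.2.1.2))

/-- The ccq state obtained from |Ψ₂⟩ by measuring the logical values λ on A and on B₂
(recording them in registers Ā and B̄), and tracing out A, B, S, B₂ and T.
Eve keeps E and the public register R. -/
def oneShotOut {d n mz mx r : ℕ} [NeZero d] {dB dS dE : ℕ}
    (u : Fin r → (Fin n → ZMod d))
    (Ψ2 : (Fin n → ZMod d) × ((Fin dB × (Fin dS × Fin dE)) ×
      ((Fin n → ZMod d) × ((Fin mz → ZMod d) × (Fin mx → ZMod d)))) → ℂ) :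
    Matrix ((Fin r → ZMod d) × ((Fin r → ZMod d) × (Fin dE × (Fin mz → ZMod d))))
           ((Fin r → ZMod d) × ((Fin r → ZMod d) × (Fin dE × (Fin mz → ZMod d)))) ℂ :=
  Matrix.of fun P Q =>
    if P.1 = Q.1 ∧ P.2.1 = Q.2.1 then
      ∑ a : Fin n → ZMod d, ∑ k2 : Fin n → ZMod d, ∑ b : Fin dB,
        ∑ sS : Fin dS, ∑ βr : Fin mx → ZMod d,
        (if synMap u a = P.1 ∧ synMap u k2 = P.2.1 then
          Ψ2 (a, ((b, (sS, P.2.2.1)), (k2, (P.2.2.2, βr)))) *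
          star (Ψ2 (a, ((b, (sS, Q.2.2.1)), (k2, (Q.2.2.2, βr)))))
        else 0)
    else 0

/-- |Ψ₂⟩ = ∑_{k,ℓ} √pₖ |k⟩(√Λ_ℓ ⊗ 1)|φₖ⟩|ℓ⟩: coherent measurement of the POVM Λ. -/
def coherentMeasVec {N dB dE : ℕ} (p : Fin N → ℝ) (φ : Fin N → (Fin dB × Fin dE) → ℂ)
    (Λ : Fin N → Matrix (Fin dB) (Fin dB) ℂ) : Fin N × ((Fin dB × Fin dE) × Fin N) → ℂ :=
  fun P => (Real.sqrt (p P.1) : ℂ) * ∑ b', psqrt (Λ P.2.2) P.2.1.1 b' * φ P.1 (b', P.2.1.2)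

/-- |Ψ₂'⟩ = ∑ₖ √pₖ |k⟩|φₖ⟩|k⟩: perfect copy of the index k. -/
def copyVec {N dB dE : ℕ} (p : Fin N → ℝ) (φ : Fin N → (Fin dB × Fin dE) → ℂ) :
    Fin N × ((Fin dB × Fin dE) × Fin N) → ℂ :=
  fun P => if P.2.2 = P.1 then (Real.sqrt (p P.1) : ℂ) * φ P.1 P.2.1 else 0


section AuxiliaryPrivacy
set_option linter.unusedSectionVars false
set_option maxHeartbeats 1000000

section Helpers

variable {a b c : Type*} [Fintype a] [Fintype b] [Fintype c]
  [DecidableEq a] [DecidableEq b] [DecidableEq c]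

lemma kron_conjT (A : Matrix a a ℂ) (B : Matrix b b ℂ) : (A ⊗ₖ B)ᴴ = Aᴴ ⊗ₖ Bᴴ := by
  ext ⟨i1, i2⟩ ⟨j1, j2⟩
  simp [Matrix.conjTranspose_apply, Matrix.kroneckerMap_apply, star_mul']

lemma kron_psd {A : Matrix a a ℂ} {B : Matrix b b ℂ}
    (hA : A.PosSemidef) (hB : B.PosSemidef) : (A ⊗ₖ B).PosSemidef := by
  exact hA.kronecker hB

lemma sum_kron_left {γ : Type*} [Fintype γ] (f : γ → Matrix a a ℂ) (B : Matrix b b ℂ) :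
    (∑ x, f x) ⊗ₖ B = ∑ x, f x ⊗ₖ B := by
  ext ⟨i1, i2⟩ ⟨j1, j2⟩
  simp [Matrix.kroneckerMap_apply, Matrix.sum_apply, Finset.sum_mul]

lemma sum_kron_right {γ : Type*} [Fintype γ] (A : Matrix a a ℂ) (f : γ → Matrix b b ℂ) :
    A ⊗ₖ (∑ x, f x) = ∑ x, A ⊗ₖ f x := by
  ext ⟨i1, i2⟩ ⟨j1, j2⟩
  simp [Matrix.kroneckerMap_apply, Matrix.sum_apply, Finset.mul_sum]

lemma ctc_trace {κ : Type*} [Fintype κ] (A : Matrix a κ ℂ) :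
    (Aᴴ * A).trace = ((∑ j, ∑ i, Complex.normSq (A i j) : ℝ) : ℂ) := by
  rw [Matrix.trace]
  push_cast
  refine Finset.sum_congr rfl fun j _ => ?_
  rw [Matrix.diag_apply, Matrix.mul_apply]
  refine Finset.sum_congr rfl fun i _ => ?_
  rw [Matrix.conjTranspose_apply]
  rw [mul_comm]; exact Complex.mul_conj (A i j)

lemma ctc_trace_re_nonneg {κ : Type*} [Fintype κ] (A : Matrix a κ ℂ) :
    0 ≤ (Aᴴ * A).trace.re := by
  rw [ctc_trace, Complex.ofReal_re]
  exact Finset.sum_nonneg fun _ _ => Finset.sum_nonneg fun _ _ => Complex.normSq_nonneg _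

lemma ctc_trace_re_zero {κ : Type*} [Fintype κ] {A : Matrix a κ ℂ}
    (h : (Aᴴ * A).trace.re = 0) : A = 0 := by
  rw [ctc_trace, Complex.ofReal_re] at h
  have h2 : ∀ j ∈ Finset.univ, (0:ℝ) ≤ ∑ i, Complex.normSq (A i j) := by
    intro j _; exact Finset.sum_nonneg fun _ _ => Complex.normSq_nonneg _
  ext i j
  have h3 := (Finset.sum_eq_zero_iff_of_nonneg h2).mp h j (Finset.mem_univ j)
  have h4 : ∀ i ∈ Finset.univ, (0:ℝ) ≤ Complex.normSq (A i j) := by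
    intro i _; exact Complex.normSq_nonneg _
  have h5 := (Finset.sum_eq_zero_iff_of_nonneg h4).mp h3 i (Finset.mem_univ i)
  simpa using Complex.normSq_eq_zero.mp h5

lemma psqrt_herm {M : Matrix a a ℂ} (hM : M.PosSemidef) :
    (posSemidefSqrt hM)ᴴ = posSemidefSqrt hM := by
  unfold posSemidefSqrt
  rw [Matrix.conjTranspose_mul, Matrix.conjTranspose_mul, Matrix.diagonal_conjTranspose,
    ← Matrix.star_eq_conjTranspose, ← Matrix.star_eq_conjTranspose, star_star, Matrix.mul_assoc]
  congr 3
  funext i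
  simp

lemma psqrt_mul_self {M : Matrix a a ℂ} (hM : M.PosSemidef) :
    posSemidefSqrt hM * posSemidefSqrt hM = M := by
  unfold posSemidefSqrt
  set U := hM.1.eigenvectorUnitary
  have hU : (star U : Matrix a a ℂ) * (U : Matrix a a ℂ) = 1 := Unitary.coe_star_mul_self U
  have hD : Matrix.diagonal (((↑) ∘ (Real.sqrt ·) ∘ hM.1.eigenvalues) : a → ℂ) *
      Matrix.diagonal ((↑) ∘ (Real.sqrt ·) ∘ hM.1.eigenvalues)
      = Matrix.diagonal (RCLike.ofReal ∘ hM.1.eigenvalues) := by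
    rw [Matrix.diagonal_mul_diagonal]
    congr 1
    funext i
    simp only [Function.comp_apply]
    rw [← Complex.ofReal_mul, Real.mul_self_sqrt (hM.eigenvalues_nonneg i)]
    rfl
  conv_rhs => rw [hM.1.spectral_theorem]
  rw [Unitary.conjStarAlgAut_apply]
  simp only [Matrix.mul_assoc]
  rw [← Matrix.mul_assoc (star U : Matrix a a ℂ), hU, Matrix.one_mul,
    ← Matrix.mul_assoc (Matrix.diagonal _), hD]

lemma trace_mul_sq_rw {M S : Matrix a a ℂ} (hM : M.PosSemidef) (hS : Sᴴ = S) :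
    (M * (S * S)).trace = ((posSemidefSqrt hM * S)ᴴ * (posSemidefSqrt hM * S)).trace := by
  have hN : (posSemidefSqrt hM)ᴴ = posSemidefSqrt hM := psqrt_herm hM
  have hNN : posSemidefSqrt hM * posSemidefSqrt hM = M := psqrt_mul_self hM
  have key : (posSemidefSqrt hM * S)ᴴ * (posSemidefSqrt hM * S) = S * (M * S) := by
    rw [Matrix.conjTranspose_mul, hN, hS, Matrix.mul_assoc,
      ← Matrix.mul_assoc (posSemidefSqrt hM), hNN]
  rw [key, ← Matrix.mul_assoc, Matrix.trace_mul_comm]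

lemma trace_mul_sq_re_nonneg {M S : Matrix a a ℂ} (hM : M.PosSemidef) (hS : Sᴴ = S) :
    0 ≤ (M * (S * S)).trace.re := by
  rw [trace_mul_sq_rw hM hS]; exact ctc_trace_re_nonneg _

lemma mul_sqrt_zero_of_trace {M S : Matrix a a ℂ} (hM : M.PosSemidef) (hS : Sᴴ = S)
    (h : (M * (S * S)).trace.re = 0) : M * S = 0 := by
  rw [trace_mul_sq_rw hM hS] at h
  have h0 : posSemidefSqrt hM * S = 0 := ctc_trace_re_zero h
  have hNN : posSemidefSqrt hM * posSemidefSqrt hM = M := psqrt_mul_self hM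
  calc M * S = posSemidefSqrt hM * (posSemidefSqrt hM * S) := by rw [← Matrix.mul_assoc, hNN]
  _ = 0 := by rw [h0, Matrix.mul_zero]

lemma sum_stdProj : ∑ k : a, stdProj k = (1 : Matrix a a ℂ) := by
  ext i j
  rw [Matrix.sum_apply]
  simp only [stdProj, Matrix.single, Matrix.of_apply, Matrix.one_apply]
  rcases eq_or_ne i j with h | h
  · subst h
    rw [Finset.sum_eq_single i]
    · simp
    · intro x _ hx; simp [hx]
    · intro h; exact absurd (Finset.mem_univ i) h
  · rw [Finset.sum_eq_zero, if_neg h]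
    intro x _
    have : ¬(x = i ∧ x = j) := by rintro ⟨rfl, rfl⟩; exact h rfl
    simp [this]

end Helpers

section ConjLemmas

variable {d : ℕ} {θ : Fin d → Fin d → ℝ}

lemma conjVec_star_mul_self (hd : 0 < d) (x k : Fin d) :
    star (conjVec d θ x k) * conjVec d θ x k = ((d : ℂ))⁻¹ := by
  have h0 : star (conjVec d θ x k) * conjVec d θ x k
      = (Complex.normSq (conjVec d θ x k) : ℂ) := by
    rw [mul_comm]; exact Complex.mul_conj _
  rw [h0]
  have h1 : Complex.normSq (Complex.exp (Complex.I * (θ x k : ℂ))) = 1 := by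
    rw [← Complex.sq_norm, Complex.norm_exp]
    simp [Complex.mul_re]
  have h2 : Complex.normSq ((Real.sqrt d : ℂ)⁻¹) = (d : ℝ)⁻¹ := by
    rw [← Complex.ofReal_inv, Complex.normSq_ofReal, ← mul_inv]
    rw [Real.mul_self_sqrt (by positivity)]
  rw [conjVec, Complex.normSq_mul, h1, h2, mul_one]
  push_cast
  ring

lemma conjProj_herm (x : Fin d) : (conjProj d θ x)ᴴ = conjProj d θ x := by
  ext i j
  simp [conjProj, Matrix.vecMulVec_apply, Matrix.conjTranspose_apply, star_mul', mul_comm]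

lemma conjProj_psd (x : Fin d) : (conjProj d θ x).PosSemidef := by
  have : conjProj d θ x
      = (Matrix.of (fun (_ : Unit) j => star (conjVec d θ x j)))ᴴ
        * (Matrix.of (fun (_ : Unit) j => star (conjVec d θ x j))) := by
    ext i j
    simp [Matrix.mul_apply, conjProj, Matrix.vecMulVec_apply, Matrix.conjTranspose_apply]
  rw [this]
  exact posSemidef_conjTranspose_mul_self _

lemma conjProj_sum (hθ : IsConjBasis d θ) : ∑ x, conjProj d θ x = (1 : Matrix (Fin d) (Fin d) ℂ) := by
  set A : Matrix (Fin d) (Fin d) ℂ := Matrix.of (fun x k => conjVec d θ x k) with hA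
  have hAAH : A * Aᴴ = 1 := by
    ext x y
    rw [Matrix.mul_apply]
    have : ∑ k, A x k * Aᴴ k y = star (∑ k, star (conjVec d θ x k) * conjVec d θ y k) := by
      rw [star_sum]
      refine Finset.sum_congr rfl fun k _ => ?_
      simp [hA, Matrix.conjTranspose_apply, star_mul', mul_comm]
    rw [this, hθ x y]
    by_cases h : x = y <;> simp [h, Matrix.one_apply]
  have hAHA : Aᴴ * A = 1 := mul_eq_one_comm.mp hAAH
  ext k l
  rw [Matrix.sum_apply]
  have h2 : (Aᴴ * A) k l = (1 : Matrix (Fin d) (Fin d) ℂ) k l := by rw [hAHA]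
  rw [Matrix.mul_apply] at h2
  have h3 : ∑ x, conjProj d θ x k l = star (∑ x, Aᴴ k x * A x l) := by
    rw [star_sum]
    refine Finset.sum_congr rfl fun x _ => ?_
    simp [conjProj, Matrix.vecMulVec_apply, hA, Matrix.conjTranspose_apply, star_mul', mul_comm]
  rw [h3, h2]
  by_cases h : k = l <;> simp [h, Matrix.one_apply]

lemma conjProj_sandwich (hd : 0 < d) (x k : Fin d) :
    conjProj d θ x * stdProj k * conjProj d θ x = (d : ℂ)⁻¹ • conjProj d θ x := by
  have h1 : conjProj d θ x * stdProj k
      = Matrix.of (fun i l => if l = k then conjProj d θ x i k else 0) := by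
    ext i l
    rw [Matrix.mul_apply, Matrix.of_apply]
    rw [Finset.sum_eq_single k]
    · by_cases hl : l = k
      · simp [stdProj, Matrix.single, hl]
      · simp [stdProj, Matrix.single, if_neg hl, Ne.symm hl]
    · intro m _ hm
      simp [stdProj, Matrix.single, Ne.symm hm]
    · intro h; exact absurd (Finset.mem_univ k) h
  rw [h1]
  ext i j
  rw [Matrix.mul_apply, Matrix.smul_apply]
  rw [Finset.sum_eq_single k]
  · simp only [Matrix.of_apply, if_pos rfl]
    simp only [conjProj, Matrix.vecMulVec_apply]
    have := conjVec_star_mul_self (θ := θ) hd x k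
    calc conjVec d θ x i * star (conjVec d θ x) k * (conjVec d θ x k * star (conjVec d θ x) j)
        = (star (conjVec d θ x k) * conjVec d θ x k)
          * (conjVec d θ x i * star (conjVec d θ x j)) := by
          simp only [Pi.star_apply]; ring
      _ = (d : ℂ)⁻¹ • (conjVec d θ x i * star (conjVec d θ x) j) := by
          rw [this]; simp [smul_eq_mul]
  · intro l _ hl
    simp [hl]
  · intro h; exact absurd (Finset.mem_univ k) h

end ConjLemmas

section KeyLemma

variable {d dBS dE : ℕ}

lemma key_trace (hd : 0 < d)
    (ρ : Matrix (Fin d × (Fin dBS × Fin dE)) (Fin d × (Fin dBS × Fin dE)) ℂ)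
    (hρ : ρ.PosSemidef)
    (θ : Fin d → Fin d → ℝ) (hθ : IsConjBasis d θ)
    (Λ : Fin d → Matrix (Fin dBS) (Fin dBS) ℂ) (hΛ : IsPOVM Λ)
    (herr : (∑ x, ∑ y, if x ≠ y then
        ((conjProj d θ x ⊗ₖ (Λ y ⊗ₖ (1 : Matrix (Fin dE) (Fin dE) ℂ))) * ρ).trace.re
      else 0) = 0)
    (C : Matrix (Fin dE) (Fin dE) ℂ) (k : Fin d) :
    ((stdProj k ⊗ₖ ((1 : Matrix (Fin dBS) (Fin dBS) ℂ) ⊗ₖ C)) * ρ).trace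
      = (d : ℂ)⁻¹ * (((1 : Matrix (Fin d) (Fin d) ℂ) ⊗ₖ
          ((1 : Matrix (Fin dBS) (Fin dBS) ℂ) ⊗ₖ C)) * ρ).trace := by
  obtain ⟨hΛpsd, hΛsum⟩ := hΛ
  set S := posSemidefSqrt hρ with hSdef
  have hSH : Sᴴ = S := psqrt_herm hρ
  have hSS : S * S = ρ := psqrt_mul_self hρ
  set R : Fin d → Matrix (Fin d × (Fin dBS × Fin dE)) (Fin d × (Fin dBS × Fin dE)) ℂ :=
    fun x => conjProj d θ x ⊗ₖ ((1 : Matrix (Fin dBS) (Fin dBS) ℂ) ⊗ₖ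
      (1 : Matrix (Fin dE) (Fin dE) ℂ)) with hRdef
  set L : Fin d → Matrix (Fin d × (Fin dBS × Fin dE)) (Fin d × (Fin dBS × Fin dE)) ℂ :=
    fun y => (1 : Matrix (Fin d) (Fin d) ℂ) ⊗ₖ (Λ y ⊗ₖ
      (1 : Matrix (Fin dE) (Fin dE) ℂ)) with hLdef
  set M : Matrix (Fin d × (Fin dBS × Fin dE)) (Fin d × (Fin dBS × Fin dE)) ℂ :=
    stdProj k ⊗ₖ ((1 : Matrix (Fin dBS) (Fin dBS) ℂ) ⊗ₖ C) with hMdef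
  have hmul3 : ∀ (A A' : Matrix (Fin d) (Fin d) ℂ) (B B' : Matrix (Fin dBS) (Fin dBS) ℂ)
      (E E' : Matrix (Fin dE) (Fin dE) ℂ),
      (A ⊗ₖ (B ⊗ₖ E)) * (A' ⊗ₖ (B' ⊗ₖ E')) = (A * A') ⊗ₖ ((B * B') ⊗ₖ (E * E')) := by
    intros A A' B B' E E'
    rw [← Matrix.mul_kronecker_mul, ← Matrix.mul_kronecker_mul]
  have hRL : ∀ x y, R x * L y = conjProj d θ x ⊗ₖ (Λ y ⊗ₖ (1 : Matrix (Fin dE) (Fin dE) ℂ)) := by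
    intro x y
    rw [hRdef, hLdef, hmul3, mul_one, one_mul, one_mul]
  have hLR : ∀ x y, L y * R x = conjProj d θ x ⊗ₖ (Λ y ⊗ₖ (1 : Matrix (Fin dE) (Fin dE) ℂ)) := by
    intro x y
    rw [hRdef, hLdef, hmul3, mul_one, one_mul, one_mul]
  -- each error term vanishes
  have hpsdxy : ∀ x y, (conjProj d θ x ⊗ₖ (Λ y ⊗ₖ (1 : Matrix (Fin dE) (Fin dE) ℂ))).PosSemidef :=
    fun x y => kron_psd (conjProj_psd x) (kron_psd (hΛpsd y) Matrix.PosSemidef.one)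
  have hterm : ∀ x y, x ≠ y →
      (conjProj d θ x ⊗ₖ (Λ y ⊗ₖ (1 : Matrix (Fin dE) (Fin dE) ℂ))) * S = 0 := by
    have hnn : ∀ x y, 0 ≤
        ((conjProj d θ x ⊗ₖ (Λ y ⊗ₖ (1 : Matrix (Fin dE) (Fin dE) ℂ))) * ρ).trace.re := by
      intro x y
      rw [← hSS]
      exact trace_mul_sq_re_nonneg (hpsdxy x y) hSH
    have houter : ∀ x ∈ Finset.univ, (0:ℝ) ≤ ∑ y, (if x ≠ y then
        ((conjProj d θ x ⊗ₖ (Λ y ⊗ₖ (1 : Matrix (Fin dE) (Fin dE) ℂ))) * ρ).trace.re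
        else 0) := by
      intro x _
      refine Finset.sum_nonneg fun y _ => ?_
      split_ifs with h
      · exact hnn x y
      · exact le_refl 0
    intro x y hxy
    have h1 := (Finset.sum_eq_zero_iff_of_nonneg houter).mp herr x (Finset.mem_univ x)
    have hinner : ∀ y ∈ Finset.univ, (0:ℝ) ≤ (if x ≠ y then
        ((conjProj d θ x ⊗ₖ (Λ y ⊗ₖ (1 : Matrix (Fin dE) (Fin dE) ℂ))) * ρ).trace.re
        else 0) := by
      intro y _
      split_ifs with h
      · exact hnn x y
      · exact le_refl 0
    have h2 := (Finset.sum_eq_zero_iff_of_nonneg hinner).mp h1 y (Finset.mem_univ y)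
    rw [if_pos hxy] at h2
    rw [← hSS] at h2
    exact mul_sqrt_zero_of_trace (hpsdxy x y) hSH h2
  have hsumR : ∑ x, R x = 1 := by
    rw [hRdef, ← sum_kron_left, conjProj_sum hθ, Matrix.one_kronecker_one,
      Matrix.one_kronecker_one]
  have hsumL : ∑ y, L y = 1 := by
    rw [hLdef, ← sum_kron_right, ← sum_kron_left, hΛsum, Matrix.one_kronecker_one,
      Matrix.one_kronecker_one]
  set T : Fin d → Matrix (Fin d × (Fin dBS × Fin dE)) (Fin d × (Fin dBS × Fin dE)) ℂ :=
    fun x => R x * S with hTdef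
  have hsumT : ∑ x, T x = S := by rw [hTdef, ← Finset.sum_mul, hsumR, one_mul]
  have hTeq : ∀ x, T x = (conjProj d θ x ⊗ₖ (Λ x ⊗ₖ (1 : Matrix (Fin dE) (Fin dE) ℂ))) * S := by
    intro x
    calc T x = R x * ((∑ y, L y) * S) := by rw [hsumL, one_mul]
      _ = ∑ y, (R x * L y) * S := by
          rw [Finset.sum_mul, Finset.mul_sum]
          exact Finset.sum_congr rfl fun y _ => (Matrix.mul_assoc _ _ _).symm
      _ = (R x * L x) * S := by
          refine Finset.sum_eq_single x (fun y _ hy => ?_) (fun h => absurd (Finset.mem_univ x) h)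
          rw [hRL, hterm x y (Ne.symm hy)]
      _ = (conjProj d θ x ⊗ₖ (Λ x ⊗ₖ (1 : Matrix (Fin dE) (Fin dE) ℂ))) * S := by rw [hRL]
  have hLT : ∀ x y, L x * T y = if x = y then T y else 0 := by
    intro x y
    have : L x * T y = (conjProj d θ y ⊗ₖ (Λ x ⊗ₖ (1 : Matrix (Fin dE) (Fin dE) ℂ))) * S := by
      rw [hTdef, ← Matrix.mul_assoc, hLR]
    rcases eq_or_ne x y with h | h
    · subst h
      rw [if_pos rfl, this, ← hTeq]
    · rw [if_neg h, this, hterm y x (Ne.symm h)]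
  have hLH : ∀ x, (L x)ᴴ = L x := by
    intro x
    rw [hLdef, kron_conjT, kron_conjT, Matrix.conjTranspose_one, Matrix.conjTranspose_one,
      (hΛpsd x).isHermitian.eq]
  have hRH : ∀ x, (R x)ᴴ = R x := by
    intro x
    rw [hRdef, kron_conjT, kron_conjT, Matrix.conjTranspose_one, Matrix.conjTranspose_one,
      conjProj_herm]
  have hTH : ∀ x, (T x)ᴴ = (T x)ᴴ * L x := by
    intro x
    conv_lhs => rw [show T x = L x * T x from by rw [hLT x x, if_pos rfl]]
    rw [Matrix.conjTranspose_mul, hLH]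
  have hcomm : ∀ x, L x * M = M * L x := by
    intro x
    rw [hLdef, hMdef, hmul3, hmul3, one_mul, mul_one, one_mul, mul_one, one_mul, mul_one]
  have cross : ∀ x y, x ≠ y → (T x)ᴴ * M * T y = 0 := by
    intro x y hxy
    calc (T x)ᴴ * M * T y = ((T x)ᴴ * L x) * M * T y := by rw [← hTH]
      _ = (T x)ᴴ * (L x * M) * T y := by rw [Matrix.mul_assoc ((T x)ᴴ)]
      _ = (T x)ᴴ * (M * L x) * T y := by rw [hcomm]
      _ = ((T x)ᴴ * M) * (L x * T y) := by
          rw [← Matrix.mul_assoc ((T x)ᴴ), Matrix.mul_assoc]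
      _ = 0 := by rw [hLT, if_neg hxy, Matrix.mul_zero]
  have diag : ∀ x, ((T x)ᴴ * (M * T x)).trace
      = (d : ℂ)⁻¹ * ((conjProj d θ x ⊗ₖ ((1 : Matrix (Fin dBS) (Fin dBS) ℂ) ⊗ₖ C)) * ρ).trace := by
    intro x
    have hTHx : (T x)ᴴ = S * R x := by
      rw [hTdef, Matrix.conjTranspose_mul, hSH, hRH]
    have hmid : R x * (M * (R x * S))
        = (d : ℂ)⁻¹ • ((conjProj d θ x ⊗ₖ ((1 : Matrix (Fin dBS) (Fin dBS) ℂ) ⊗ₖ C)) * S) := by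
      rw [← Matrix.mul_assoc, ← Matrix.mul_assoc]
      rw [hRdef, hMdef, hmul3, hmul3]
      simp only [one_mul, mul_one]
      rw [conjProj_sandwich hd x k, Matrix.smul_kronecker, smul_mul_assoc]
    rw [hTHx, show T x = R x * S from rfl]
    simp only [Matrix.mul_assoc]
    rw [hmid, mul_smul_comm, Matrix.trace_smul, smul_eq_mul]
    rw [Matrix.trace_mul_comm, Matrix.mul_assoc, hSS]
  calc (M * ρ).trace = (S * (M * S)).trace := by
        rw [← hSS, ← Matrix.mul_assoc, Matrix.trace_mul_comm]
    _ = ((∑ x, T x)ᴴ * (M * (∑ y, T y))).trace := by rw [hsumT, hSH]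
    _ = ∑ x, ∑ y, ((T x)ᴴ * (M * T y)).trace := by
        rw [Matrix.conjTranspose_sum, Finset.sum_mul, Matrix.trace_sum]
        refine Finset.sum_congr rfl fun x _ => ?_
        rw [Finset.mul_sum, Finset.mul_sum, Matrix.trace_sum]
    _ = ∑ x, ((T x)ᴴ * (M * T x)).trace := by
        refine Finset.sum_congr rfl fun x _ => ?_
        refine Finset.sum_eq_single x (fun y _ hyx => ?_)
          (fun h => absurd (Finset.mem_univ x) h)
        rw [← Matrix.mul_assoc, cross x y (Ne.symm hyx), Matrix.trace_zero]
    _ = ∑ x, (d : ℂ)⁻¹ *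
        ((conjProj d θ x ⊗ₖ ((1 : Matrix (Fin dBS) (Fin dBS) ℂ) ⊗ₖ C)) * ρ).trace := by
        exact Finset.sum_congr rfl fun x _ => diag x
    _ = (d : ℂ)⁻¹ * (((1 : Matrix (Fin d) (Fin d) ℂ) ⊗ₖ
          ((1 : Matrix (Fin dBS) (Fin dBS) ℂ) ⊗ₖ C)) * ρ).trace := by
        rw [← Finset.mul_sum]
        congr 1
        rw [← Matrix.trace_sum, ← Finset.sum_mul, ← sum_kron_left, conjProj_sum hθ]

end KeyLemma

lemma condEnt_uniform {d : ℕ} {μE : Type} [Fintype μE] (hd : 0 < d)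
    (q : μE → ℝ) (hq0 : ∀ g, 0 ≤ q g) (hq1 : ∑ g, q g = 1) :
    condEnt (fun kg : Fin d × μE => (d : ℝ)⁻¹ * q kg.2) = Real.logb 2 d := by
  have hdR : (d : ℝ) ≠ 0 := Nat.cast_ne_zero.mpr hd.ne'
  have key : ∀ y : ℝ, 0 ≤ y →
      negMulLog2 ((d : ℝ)⁻¹ * y) = (d : ℝ)⁻¹ * (negMulLog2 y + y * Real.logb 2 d) := by
    intro y hy
    rcases eq_or_lt_of_le hy with h | h
    · simp [negMulLog2, ← h]
    · rw [negMulLog2, Real.logb_mul (inv_ne_zero hdR) h.ne', Real.logb_inv, negMulLog2]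
      ring
  have hmarg : (fun b : μE => ∑ _a : Fin d, (d : ℝ)⁻¹ * q b) = q := by
    funext b
    rw [Finset.sum_const, Finset.card_univ, Fintype.card_fin, nsmul_eq_mul]
    field_simp
  have h1 : shannon (fun kg : Fin d × μE => (d : ℝ)⁻¹ * q kg.2)
      = shannon q + Real.logb 2 d := by
    rw [shannon, Fintype.sum_prod_type]
    calc ∑ _k : Fin d, ∑ g, negMulLog2 ((d : ℝ)⁻¹ * q g)
        = ∑ _k : Fin d, ∑ g, (d : ℝ)⁻¹ * (negMulLog2 (q g) + q g * Real.logb 2 d) := by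
          exact Finset.sum_congr rfl fun _ _ =>
            Finset.sum_congr rfl fun g _ => key _ (hq0 g)
      _ = (d : ℝ) * ((d : ℝ)⁻¹ * ((∑ g, negMulLog2 (q g)) + (∑ g, q g) * Real.logb 2 d)) := by
          rw [Finset.sum_const, Finset.card_univ, Fintype.card_fin, nsmul_eq_mul]
          congr 1
          rw [← Finset.mul_sum, Finset.sum_add_distrib, ← Finset.sum_mul]
      _ = shannon q + Real.logb 2 d := by
          rw [← mul_assoc, mul_inv_cancel₀ hdR, one_mul, hq1, one_mul, shannon]
  rw [condEnt, hmarg, h1]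
  ring

end AuxiliaryPrivacy

/-- **Privacy from conjugate predictability.**
If a measurement on B ⊗ S perfectly predicts the conjugate-basis observable X̃^A, then for
every POVM Γ on the purifying system E the standard-basis outcome on A has conditional
entropy log₂ d given Γ; equivalently it is uniform and independent of Γ's outcome. -/
theorem privacy_from_conjugate_predictability
    {d dBS dE : ℕ} (hd : 0 < d)
    (ρ : Matrix (Fin d × (Fin dBS × Fin dE)) (Fin d × (Fin dBS × Fin dE)) ℂ)
    (hρ : IsDensity ρ)
    (θ : Fin d → Fin d → ℝ) (hθ : IsConjBasis d θ)
    (Λ : Fin d → Matrix (Fin dBS) (Fin dBS) ℂ) (hΛ : IsPOVM Λ)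
    (herr : (∑ x, ∑ y, if x ≠ y then
        ((conjProj d θ x ⊗ₖ (Λ y ⊗ₖ (1 : Matrix (Fin dE) (Fin dE) ℂ))) * ρ).trace.re
      else 0) = 0)
    {μE : Type} [Fintype μE]
    (Γ : μE → Matrix (Fin dE) (Fin dE) ℂ) (hΓ : IsPOVM Γ) :
    condEnt (fun kg : Fin d × μE =>
        ((stdProj kg.1 ⊗ₖ ((1 : Matrix (Fin dBS) (Fin dBS) ℂ) ⊗ₖ Γ kg.2)) * ρ).trace.re)
      = Real.logb 2 d ∧
    ∀ (k : Fin d) (g : μE),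
      ((stdProj k ⊗ₖ ((1 : Matrix (Fin dBS) (Fin dBS) ℂ) ⊗ₖ Γ g)) * ρ).trace.re
        = (d : ℝ)⁻¹ *
          ∑ k', ((stdProj k' ⊗ₖ ((1 : Matrix (Fin dBS) (Fin dBS) ℂ) ⊗ₖ Γ g)) * ρ).trace.re := by
  obtain ⟨hΓpsd, hΓsum⟩ := hΓ
  have hdR : (d : ℝ) ≠ 0 := Nat.cast_ne_zero.mpr hd.ne'
  have hSH : (posSemidefSqrt hρ.1)ᴴ = posSemidefSqrt hρ.1 := psqrt_herm hρ.1
  have hSS : posSemidefSqrt hρ.1 * posSemidefSqrt hρ.1 = ρ := psqrt_mul_self hρ.1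
  have hinv : (((d : ℝ)⁻¹ : ℝ) : ℂ) = (d : ℂ)⁻¹ := by push_cast; ring
  have hp : ∀ (k : Fin d) (g : μE),
      ((stdProj k ⊗ₖ ((1 : Matrix (Fin dBS) (Fin dBS) ℂ) ⊗ₖ Γ g)) * ρ).trace.re
        = (d : ℝ)⁻¹ * (((1 : Matrix (Fin d) (Fin d) ℂ) ⊗ₖ
            ((1 : Matrix (Fin dBS) (Fin dBS) ℂ) ⊗ₖ Γ g)) * ρ).trace.re := by
    intro k g
    rw [key_trace hd ρ hρ.1 θ hθ Λ hΛ herr (Γ g) k, ← hinv, Complex.re_ofReal_mul]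
  have hq0 : ∀ g, 0 ≤ (((1 : Matrix (Fin d) (Fin d) ℂ) ⊗ₖ
      ((1 : Matrix (Fin dBS) (Fin dBS) ℂ) ⊗ₖ Γ g)) * ρ).trace.re := by
    intro g
    have hN : ((1 : Matrix (Fin d) (Fin d) ℂ) ⊗ₖ
        ((1 : Matrix (Fin dBS) (Fin dBS) ℂ) ⊗ₖ Γ g)).PosSemidef :=
      kron_psd Matrix.PosSemidef.one (kron_psd Matrix.PosSemidef.one (hΓpsd g))
    rw [← hSS]
    exact trace_mul_sq_re_nonneg hN hSH
  have hq1 : ∑ g, (((1 : Matrix (Fin d) (Fin d) ℂ) ⊗ₖ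
      ((1 : Matrix (Fin dBS) (Fin dBS) ℂ) ⊗ₖ Γ g)) * ρ).trace.re = 1 := by
    have hsum : ∑ g, ((1 : Matrix (Fin d) (Fin d) ℂ) ⊗ₖ
        ((1 : Matrix (Fin dBS) (Fin dBS) ℂ) ⊗ₖ Γ g)) = 1 := by
      rw [← sum_kron_right, ← sum_kron_right, hΓsum, Matrix.one_kronecker_one,
        Matrix.one_kronecker_one]
    rw [← Complex.re_sum, ← Matrix.trace_sum, ← Finset.sum_mul, hsum, one_mul, hρ.2]
    simp
  have hsumk : ∀ g, (∑ k', ((stdProj k' ⊗ₖ ((1 : Matrix (Fin dBS) (Fin dBS) ℂ) ⊗ₖ Γ g))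
        * ρ).trace.re)
      = (((1 : Matrix (Fin d) (Fin d) ℂ) ⊗ₖ
          ((1 : Matrix (Fin dBS) (Fin dBS) ℂ) ⊗ₖ Γ g)) * ρ).trace.re := by
    intro g
    calc (∑ k', ((stdProj k' ⊗ₖ ((1 : Matrix (Fin dBS) (Fin dBS) ℂ) ⊗ₖ Γ g)) * ρ).trace.re)
        = ∑ _k' : Fin d, (d : ℝ)⁻¹ * (((1 : Matrix (Fin d) (Fin d) ℂ) ⊗ₖ
            ((1 : Matrix (Fin dBS) (Fin dBS) ℂ) ⊗ₖ Γ g)) * ρ).trace.re :=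
          Finset.sum_congr rfl fun k' _ => hp k' g
      _ = _ := by
          rw [Finset.sum_const, Finset.card_univ, Fintype.card_fin, nsmul_eq_mul,
            ← mul_assoc, mul_inv_cancel₀ hdR, one_mul]
  constructor
  · have hfun : (fun kg : Fin d × μE =>
        ((stdProj kg.1 ⊗ₖ ((1 : Matrix (Fin dBS) (Fin dBS) ℂ) ⊗ₖ Γ kg.2)) * ρ).trace.re)
        = fun kg : Fin d × μE => (d : ℝ)⁻¹ * (((1 : Matrix (Fin d) (Fin d) ℂ) ⊗ₖ
            ((1 : Matrix (Fin dBS) (Fin dBS) ℂ) ⊗ₖ Γ kg.2)) * ρ).trace.re :=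
      funext fun kg => hp kg.1 kg.2
    rw [hfun]
    exact condEnt_uniform hd _ hq0 hq1
  · intro k g
    rw [hp k g, hsumk g]
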